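/- Let F be a lifting of a degree-one continuous circle map. Then the map α ↦ ρ(F_α) from [0, ‖F − F_l‖_∞] to the rotation interval Rot(F) = [ρ(F_l), ρ(F_u)] is continuous, non-decreasing, and surjective. In particular, for every ρ in Rot(F) there exists α with ρ(F_α) = ρ. -/

import Mathlib

open Filter Set

noncomputable def lowerLift (F : ℝ → ℝ) (x : ℝ) : ℝ := sInf (F '' Set.Ici x)

noncomputable def upperLift (F : ℝ → ℝ) (x : ℝ) : ℝ := sSup (F '' Set.Iic x)

noncomputable def supDiff (F : ℝ → ℝ) : ℝ := ⨆ x : ℝ, (F x - lowerLift F x)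

noncomputable def water (F : ℝ → ℝ) (α : ℝ) : ℝ → ℝ :=
  upperLift (fun y => min (F y) (lowerLift F y + α))

private lemma sSup_add_const' {s : Set ℝ} (hs : s.Nonempty) (hb : BddAbove s) (c : ℝ) :
    sSup ((fun b => b + c) '' s) = sSup s + c := by
  have H : IsLUB ((fun b => b + c) '' s) (sSup s + c) := by
    constructor
    · rintro b ⟨y, hy, rfl⟩
      exact add_le_add_left (le_csSup hb hy) c
    · intro w hw
      have : sSup s ≤ w - c := by
        apply csSup_le hs
        intro y hy
        have := hw (mem_image_of_mem _ hy)
        linarith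
      linarith
  exact H.csSup_eq (hs.image _)

private lemma sInf_add_const' {s : Set ℝ} (hs : s.Nonempty) (hb : BddBelow s) (c : ℝ) :
    sInf ((fun b => b + c) '' s) = sInf s + c := by
  have H : IsGLB ((fun b => b + c) '' s) (sInf s + c) := by
    constructor
    · rintro b ⟨y, hy, rfl⟩
      exact add_le_add_left (csInf_le hb hy) c
    · intro w hw
      have : w - c ≤ sInf s := by
        apply le_csInf hs
        intro y hy
        have := hw (mem_image_of_mem _ hy)
        linarith
      linarith
  exact H.csInf_eq (hs.image _)

private lemma deg_nat {h : ℝ → ℝ} (hd : ∀ x, h (x + 1) = h x + 1) (n : ℕ) (x : ℝ) :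
    h (x + n) = h x + n := by
  induction n with
  | zero => simp
  | succ n ih =>
    have e : x + ((n + 1 : ℕ) : ℝ) = (x + n) + 1 := by push_cast; ring
    rw [e, hd, ih]; push_cast; ring

private lemma deg_int {h : ℝ → ℝ} (hd : ∀ x, h (x + 1) = h x + 1) (m : ℤ) (x : ℝ) :
    h (x + m) = h x + m := by
  induction m using Int.induction_on with
  | zero => simp
  | succ n ih =>
    have e : x + ((n + 1 : ℤ) : ℝ) = (x + (n : ℤ)) + 1 := by push_cast; ring
    rw [e, hd, ih]; push_cast; ring
  | pred n ih =>
    have h1 := hd (x + ((-(n : ℤ) - 1 : ℤ) : ℝ))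
    have e : x + ((-(n : ℤ) - 1 : ℤ) : ℝ) + 1 = x + ((-(n : ℤ) : ℤ) : ℝ) := by push_cast; ring
    rw [e, ih] at h1
    push_cast at h1 ⊢
    linarith

private lemma le_bound {h : ℝ → ℝ} (hc : Continuous h) (hd : ∀ x, h (x + 1) = h x + 1)
    (x : ℝ) : ∀ y ∈ Iic x, h y ≤ sSup (h '' Icc (x - 1) x) := by
  intro y hy
  have h0 : (0 : ℝ) ≤ x - y := by simp only [mem_Iic] at hy; linarith
  set n := ⌊x - y⌋₊ with hn
  have h1 : (n : ℝ) ≤ x - y := Nat.floor_le h0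
  have h2 : x - y < n + 1 := Nat.lt_floor_add_one _
  have hmem : y + (n : ℝ) ∈ Icc (x - 1) x := ⟨by linarith, by linarith⟩
  have hle : h y ≤ h (y + n) := by
    rw [deg_nat hd n y]
    have : (0 : ℝ) ≤ (n : ℝ) := Nat.cast_nonneg n
    linarith
  exact hle.trans (le_csSup (isCompact_Icc.image hc).bddAbove (mem_image_of_mem h hmem))

private lemma ge_bound {h : ℝ → ℝ} (hc : Continuous h) (hd : ∀ x, h (x + 1) = h x + 1)
    (x : ℝ) : ∀ y ∈ Ici x, sInf (h '' Icc x (x + 1)) ≤ h y := by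
  intro y hy
  have h0 : (0 : ℝ) ≤ y - x := by simp only [mem_Ici] at hy; linarith
  set n := ⌊y - x⌋₊ with hn
  have h1 : (n : ℝ) ≤ y - x := Nat.floor_le h0
  have h2 : y - x < n + 1 := Nat.lt_floor_add_one _
  have hmem : y - (n : ℝ) ∈ Icc x (x + 1) := ⟨by linarith, by linarith⟩
  have hle : h (y - n) ≤ h y := by
    have e : y = (y - n) + (n : ℝ) := by ring
    nth_rewrite 2 [e]
    rw [deg_nat hd n (y - n)]
    have : (0 : ℝ) ≤ (n : ℝ) := Nat.cast_nonneg n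
    linarith
  exact (csInf_le (isCompact_Icc.image hc).bddBelow (mem_image_of_mem h hmem)).trans hle

private lemma bddAbove_img_Iic {h : ℝ → ℝ} (hc : Continuous h) (hd : ∀ x, h (x + 1) = h x + 1)
    (x : ℝ) : BddAbove (h '' Iic x) := by
  refine ⟨sSup (h '' Icc (x - 1) x), ?_⟩
  rintro b ⟨y, hy, rfl⟩
  exact le_bound hc hd x y hy

private lemma bddBelow_img_Ici {h : ℝ → ℝ} (hc : Continuous h) (hd : ∀ x, h (x + 1) = h x + 1)
    (x : ℝ) : BddBelow (h '' Ici x) := by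
  refine ⟨sInf (h '' Icc x (x + 1)), ?_⟩
  rintro b ⟨y, hy, rfl⟩
  exact ge_bound hc hd x y hy

private lemma upperLift_mono' {h : ℝ → ℝ} (hc : Continuous h) (hd : ∀ x, h (x + 1) = h x + 1) :
    Monotone (upperLift h) := fun a b hab =>
  csSup_le_csSup (bddAbove_img_Iic hc hd b) (nonempty_Iic.image h)
    (image_mono (Iic_subset_Iic.2 hab))

private lemma lowerLift_mono' {h : ℝ → ℝ} (hc : Continuous h) (hd : ∀ x, h (x + 1) = h x + 1) :
    Monotone (lowerLift h) := fun a b hab =>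
  csInf_le_csInf (bddBelow_img_Ici hc hd a) (nonempty_Ici.image h)
    (image_mono (Ici_subset_Ici.2 hab))

private lemma lowerLift_le_self {h : ℝ → ℝ} (hc : Continuous h) (hd : ∀ x, h (x + 1) = h x + 1)
    (x : ℝ) : lowerLift h x ≤ h x :=
  csInf_le (bddBelow_img_Ici hc hd x) ⟨x, self_mem_Ici, rfl⟩

private lemma upperLift_add_one {h : ℝ → ℝ} (hc : Continuous h) (hd : ∀ x, h (x + 1) = h x + 1)
    (x : ℝ) : upperLift h (x + 1) = upperLift h x + 1 := by
  have himg : h '' Iic (x + 1) = (fun b => b + 1) '' (h '' Iic x) := by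
    ext b
    constructor
    · rintro ⟨y, hy, rfl⟩
      refine ⟨h (y - 1), ⟨y - 1, ?_, rfl⟩, ?_⟩
      · simp only [mem_Iic] at hy ⊢; linarith
      · have := hd (y - 1)
        simp only [sub_add_cancel] at this
        simp only [this]
    · rintro ⟨_, ⟨y, hy, rfl⟩, rfl⟩
      refine ⟨y + 1, ?_, (hd y).symm ▸ rfl⟩
      simp only [mem_Iic] at hy ⊢; linarith
  rw [upperLift, himg, sSup_add_const' (nonempty_Iic.image h) (bddAbove_img_Iic hc hd x)]
  rfl

private lemma lowerLift_add_one {h : ℝ → ℝ} (hc : Continuous h) (hd : ∀ x, h (x + 1) = h x + 1)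
    (x : ℝ) : lowerLift h (x + 1) = lowerLift h x + 1 := by
  have himg : h '' Ici (x + 1) = (fun b => b + 1) '' (h '' Ici x) := by
    ext b
    constructor
    · rintro ⟨y, hy, rfl⟩
      refine ⟨h (y - 1), ⟨y - 1, ?_, rfl⟩, ?_⟩
      · simp only [mem_Ici] at hy ⊢; linarith
      · have := hd (y - 1)
        simp only [sub_add_cancel] at this
        simp only [this]
    · rintro ⟨_, ⟨y, hy, rfl⟩, rfl⟩
      refine ⟨y + 1, ?_, (hd y).symm ▸ rfl⟩
      simp only [mem_Ici] at hy ⊢; linarith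
  rw [lowerLift, himg, sInf_add_const' (nonempty_Ici.image h) (bddBelow_img_Ici hc hd x)]
  rfl

private lemma upperLift_continuous {h : ℝ → ℝ} (hc : Continuous h)
    (hd : ∀ x, h (x + 1) = h x + 1) : Continuous (upperLift h) := by
  rw [Metric.continuous_iff]
  intro x ε hε
  -- uniform continuity of h on K = Icc (x-2) (x+2)
  have hK : IsCompact (Icc (x - 2) (x + 2)) := isCompact_Icc
  have huc := hK.uniformContinuousOn_of_continuous hc.continuousOn
  rw [Metric.uniformContinuousOn_iff] at huc
  obtain ⟨δ, hδ0, hδ⟩ := huc (ε / 2) (by linarith)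
  refine ⟨min δ 1, lt_min hδ0 one_pos, ?_⟩
  have hδ1 : min δ 1 ≤ 1 := min_le_right _ _
  have hδd : min δ 1 ≤ δ := min_le_left _ _
  have key : ∀ a b : ℝ, a ∈ Icc (x - 1) (x + 1) → b ∈ Icc (x - 1) (x + 1) → a ≤ b →
      b - a < min δ 1 → upperLift h b ≤ upperLift h a + ε / 2 := by
    intro a b ha hb hab hcl
    apply csSup_le (nonempty_Iic.image h)
    rintro _ ⟨y, hy, rfl⟩
    simp only [mem_Iic] at hy
    by_cases hya : y ≤ a
    · have : h y ≤ upperLift h a := le_csSup (bddAbove_img_Iic hc hd a) ⟨y, hya, rfl⟩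
      linarith
    · push_neg at hya
      set z := y - (b - a) with hz
      have hza : z ≤ a := by simp only [hz]; linarith
      have hyK : y ∈ Icc (x - 2) (x + 2) := by
        rw [mem_Icc]
        have h1 := ha.1
        have h2 := hb.2
        constructor <;> linarith
      have hzK : z ∈ Icc (x - 2) (x + 2) := by
        simp only [hz, mem_Icc]
        have h1 := ha.1
        have h2 := ha.2
        constructor <;> [linarith; linarith]
      have hdist : dist y z < δ := by
        rw [Real.dist_eq, hz]
        have : |y - (y - (b - a))| = |b - a| := by ring_nf
        rw [show y - (y - (b - a)) = b - a by ring, abs_of_nonneg (by linarith)]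
        linarith
      have := hδ y hyK z hzK hdist
      rw [Real.dist_eq] at this
      have hyz : h y ≤ h z + ε / 2 := by
        have := abs_lt.1 this
        linarith [this.2]
      have : h z ≤ upperLift h a := le_csSup (bddAbove_img_Iic hc hd a) ⟨z, hza, rfl⟩
      linarith
  intro a hax
  rw [Real.dist_eq] at hax
  rw [Real.dist_eq]
  rcases le_total a x with hle | hle
  · have h1 : upperLift h a ≤ upperLift h x := upperLift_mono' hc hd hle
    have h2 : upperLift h x ≤ upperLift h a + ε / 2 := by
      apply key a x ⟨by cases abs_lt.1 hax; linarith, by linarith⟩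
        ⟨by linarith, by linarith⟩ hle
      cases abs_lt.1 hax; rw [abs_sub_comm] at hax; cases abs_lt.1 hax; linarith
    rw [abs_lt]; constructor <;> linarith
  · have h1 : upperLift h x ≤ upperLift h a := upperLift_mono' hc hd hle
    have h2 : upperLift h a ≤ upperLift h x + ε / 2 := by
      apply key x a ⟨by linarith, by linarith⟩
        ⟨by cases abs_lt.1 hax; linarith, by cases abs_lt.1 hax; linarith⟩ hle
      cases abs_lt.1 hax; linarith
    rw [abs_lt]; constructor <;> linarith

private lemma lowerLift_continuous {h : ℝ → ℝ} (hc : Continuous h)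
    (hd : ∀ x, h (x + 1) = h x + 1) : Continuous (lowerLift h) := by
  rw [Metric.continuous_iff]
  intro x ε hε
  have hK : IsCompact (Icc (x - 2) (x + 2)) := isCompact_Icc
  have huc := hK.uniformContinuousOn_of_continuous hc.continuousOn
  rw [Metric.uniformContinuousOn_iff] at huc
  obtain ⟨δ, hδ0, hδ⟩ := huc (ε / 2) (by linarith)
  refine ⟨min δ 1, lt_min hδ0 one_pos, ?_⟩
  have hδ1 : min δ 1 ≤ 1 := min_le_right _ _
  have hδd : min δ 1 ≤ δ := min_le_left _ _
  have key : ∀ a b : ℝ, a ∈ Icc (x - 1) (x + 1) → b ∈ Icc (x - 1) (x + 1) → a ≤ b →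
      b - a < min δ 1 → lowerLift h b ≤ lowerLift h a + ε / 2 := by
    intro a b ha hb hab hcl
    have hlb : lowerLift h b - ε / 2 ≤ lowerLift h a := by
      apply le_csInf (nonempty_Ici.image h)
      rintro _ ⟨y, hy, rfl⟩
      simp only [mem_Ici] at hy
      by_cases hyb : b ≤ y
      · have : lowerLift h b ≤ h y := csInf_le (bddBelow_img_Ici hc hd b) ⟨y, hyb, rfl⟩
        linarith
      · push_neg at hyb
        set z := y + (b - a) with hz
        have hzb : b ≤ z := by simp only [hz]; linarith
        have hyK : y ∈ Icc (x - 2) (x + 2) := by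
          rw [mem_Icc]
          have h1 := ha.1
          have h2 := hb.2
          constructor <;> linarith
        have hzK : z ∈ Icc (x - 2) (x + 2) := by
          rw [mem_Icc]
          have h1 := ha.1
          have h2 := hb.2
          simp only [hz]
          constructor <;> linarith
        have hdist : dist z y < δ := by
          rw [Real.dist_eq, show z - y = b - a by simp only [hz]; ring,
            abs_of_nonneg (by linarith)]
          linarith
        have hzy := hδ z hzK y hyK hdist
        rw [Real.dist_eq] at hzy
        have h1 : lowerLift h b ≤ h z := csInf_le (bddBelow_img_Ici hc hd b) ⟨z, hzb, rfl⟩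
        have h2 := abs_lt.1 hzy
        linarith [h2.1, h2.2]
    linarith
  intro a hax
  rw [Real.dist_eq] at hax
  rw [Real.dist_eq]
  rcases le_total a x with hle | hle
  · have h1 : lowerLift h a ≤ lowerLift h x := lowerLift_mono' hc hd hle
    have h2 : lowerLift h x ≤ lowerLift h a + ε / 2 := by
      apply key a x ⟨by cases abs_lt.1 hax; linarith, by linarith⟩
        ⟨by linarith, by linarith⟩ hle
      cases abs_lt.1 hax; rw [abs_sub_comm] at hax; cases abs_lt.1 hax; linarith
    rw [abs_lt]; constructor <;> linarith
  · have h1 : lowerLift h x ≤ lowerLift h a := lowerLift_mono' hc hd hle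
    have h2 : lowerLift h a ≤ lowerLift h x + ε / 2 := by
      apply key x a ⟨by linarith, by linarith⟩
        ⟨by cases abs_lt.1 hax; linarith, by cases abs_lt.1 hax; linarith⟩ hle
      cases abs_lt.1 hax; linarith
    rw [abs_lt]; constructor <;> linarith

section waterfacts
variable {F : ℝ → ℝ} (hFc : Continuous F) (hFd : ∀ x : ℝ, F (x + 1) = F x + 1)
include hFc hFd

private lemma g_cont (α : ℝ) : Continuous (fun y => min (F y) (lowerLift F y + α)) :=
  hFc.min ((lowerLift_continuous hFc hFd).add continuous_const)

private lemma g_deg (α : ℝ) :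
    ∀ y : ℝ, min (F (y + 1)) (lowerLift F (y + 1) + α) = min (F y) (lowerLift F y + α) + 1 := by
  intro y
  rw [hFd y, lowerLift_add_one hFc hFd y,
    show lowerLift F y + 1 + α = (lowerLift F y + α) + 1 by ring, min_add_add_right]

private lemma water_mono (α : ℝ) : Monotone (water F α) :=
  upperLift_mono' (g_cont hFc hFd α) (g_deg hFc hFd α)

private lemma water_cont (α : ℝ) : Continuous (water F α) :=
  upperLift_continuous (g_cont hFc hFd α) (g_deg hFc hFd α)

private lemma water_int (α : ℝ) (m : ℤ) (x : ℝ) : water F α (x + m) = water F α x + m :=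
  deg_int (upperLift_add_one (g_cont hFc hFd α) (g_deg hFc hFd α)) m x

private lemma water_param_le {α β : ℝ} (hab : α ≤ β) (x : ℝ) :
    water F α x ≤ water F β x := by
  apply csSup_le (nonempty_Iic.image _)
  rintro _ ⟨y, hy, rfl⟩
  refine le_trans (min_le_min le_rfl (by linarith))
    (le_csSup (bddAbove_img_Iic (g_cont hFc hFd β) (g_deg hFc hFd β) x) ⟨y, hy, rfl⟩)

private lemma water_param_lip {α β : ℝ} (hab : α ≤ β) (x : ℝ) :
    water F β x ≤ water F α x + (β - α) := by
  apply csSup_le (nonempty_Iic.image _)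
  rintro _ ⟨y, hy, rfl⟩
  have h1 : min (F y) (lowerLift F y + β) ≤ min (F y) (lowerLift F y + α) + (β - α) := by
    rcases min_le_iff.1 (le_refl (min (F y) (lowerLift F y + β))) with _ | _ <;>
    · rcases le_total (F y) (lowerLift F y + α) with hm | hm
      · rw [min_eq_left hm]
        exact le_trans (min_le_left _ _) (by linarith)
      · rw [min_eq_right hm]
        exact le_trans (min_le_right _ _) (by linarith)
  exact le_trans h1 (add_le_add_left
    (le_csSup (bddAbove_img_Iic (g_cont hFc hFd α) (g_deg hFc hFd α) x) ⟨y, hy, rfl⟩) _)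

private lemma water_dist (α β x : ℝ) : |water F β x - water F α x| ≤ |β - α| := by
  rcases le_total α β with hab | hab
  · have h1 := water_param_le hFc hFd hab x
    have h2 := water_param_lip hFc hFd hab x
    rw [abs_of_nonneg (by linarith), abs_of_nonneg (by linarith)]
    linarith
  · have h1 := water_param_le hFc hFd hab x
    have h2 := water_param_lip hFc hFd hab x
    rw [abs_of_nonpos (by linarith), abs_of_nonpos (by linarith)]
    linarith

private lemma water_iter_int (α : ℝ) (n : ℕ) (m : ℤ) (x : ℝ) :
    (water F α)^[n] (x + m) = (water F α)^[n] x + m := by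
  induction n with
  | zero => simp
  | succ n ih => rw [Function.iterate_succ_apply', Function.iterate_succ_apply', ih,
      water_int hFc hFd α m]

private lemma water_iter_le {α β : ℝ} (hab : α ≤ β) (n : ℕ) (x : ℝ) :
    (water F α)^[n] x ≤ (water F β)^[n] x := by
  induction n with
  | zero => simp
  | succ n ih =>
    rw [Function.iterate_succ_apply', Function.iterate_succ_apply']
    exact le_trans (water_param_le hFc hFd hab _) (water_mono hFc hFd β ih)

end waterfacts

private lemma displacement {G : ℝ → ℝ} (hm : Monotone G)
    (hint : ∀ (n : ℕ) (m : ℤ) (x : ℝ), G^[n] (x + m) = G^[n] x + m) {r : ℝ}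
    (hT : Tendsto (fun n : ℕ => (G^[n] 0 - 0) / n) atTop (nhds r)) (n : ℕ) (hn : 0 < n) :
    (G^[n] 0 - 1) / n ≤ r ∧ r ≤ (G^[n] 0 + 1) / n := by
  set d := G^[n] 0 with hd
  have claim1 : ∀ y : ℝ, y + (d - 1) ≤ G^[n] y ∧ G^[n] y ≤ y + (d + 1) := by
    intro y
    have hk1 : ((⌊y⌋ : ℤ) : ℝ) ≤ y := Int.floor_le y
    have hk2 : y < (⌊y⌋ : ℤ) + 1 := Int.lt_floor_add_one y
    constructor
    · have h1 : G^[n] ((⌊y⌋ : ℤ) : ℝ) ≤ G^[n] y := (hm.iterate n) hk1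
      have h2 : G^[n] ((⌊y⌋ : ℤ) : ℝ) = d + ⌊y⌋ := by
        have := hint n ⌊y⌋ 0
        simpa using this
      rw [h2] at h1
      linarith
    · have h1 : G^[n] y ≤ G^[n] ((⌊y⌋ + 1 : ℤ) : ℝ) := (hm.iterate n) (by push_cast; linarith)
      have h2 : G^[n] ((⌊y⌋ + 1 : ℤ) : ℝ) = d + (⌊y⌋ + 1) := by
        have := hint n (⌊y⌋ + 1) 0
        push_cast at this ⊢
        simpa using this
      rw [h2] at h1
      push_cast at h1
      linarith
  have claim2 : ∀ k : ℕ, (k : ℝ) * (d - 1) ≤ G^[n * k] 0 ∧ G^[n * k] 0 ≤ (k : ℝ) * (d + 1) := by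
    intro k
    induction k with
    | zero => simp
    | succ k ih =>
      have he : n * (k + 1) = n + n * k := by ring
      rw [he, Function.iterate_add_apply]
      have hc := claim1 (G^[n * k] 0)
      push_cast
      constructor <;> nlinarith [ih.1, ih.2, hc.1, hc.2]
  have htend : Tendsto (fun k : ℕ => n * k) atTop atTop :=
    tendsto_atTop_mono (fun k => Nat.le_mul_of_pos_left k hn) tendsto_id
  have hTk := hT.comp htend
  have npos : (0 : ℝ) < n := by exact_mod_cast hn
  constructor
  · apply ge_of_tendsto hTk
    filter_upwards [eventually_ge_atTop 1] with k hk
    have kpos : (0 : ℝ) < k := by exact_mod_cast hk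
    simp only [Function.comp_apply]
    have hcast : ((n * k : ℕ) : ℝ) = (n : ℝ) * k := by push_cast; ring
    rw [hcast, div_le_div_iff₀ npos (by positivity)]
    have h1 := (claim2 k).1
    nlinarith
  · apply le_of_tendsto hTk
    filter_upwards [eventually_ge_atTop 1] with k hk
    have kpos : (0 : ℝ) < k := by exact_mod_cast hk
    simp only [Function.comp_apply]
    have hcast : ((n * k : ℕ) : ℝ) = (n : ℝ) * k := by push_cast; ring
    rw [hcast, div_le_div_iff₀ (by positivity) npos]
    have h1 := (claim2 k).2
    nlinarith

private lemma iter_param_tendsto {F : ℝ → ℝ} (hFc : Continuous F)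
    (hFd : ∀ x : ℝ, F (x + 1) = F x + 1) (α : ℝ) (n : ℕ) :
    Tendsto (fun β => (water F β)^[n] 0) (nhds α) (nhds ((water F α)^[n] 0)) := by
  induction n with
  | zero => simpa using tendsto_const_nhds
  | succ n ih =>
    simp only [Function.iterate_succ_apply']
    have T1 : Tendsto (fun β => water F α ((water F β)^[n] 0)) (nhds α)
        (nhds (water F α ((water F α)^[n] 0))) :=
      ((water_cont hFc hFd α).tendsto _).comp ih
    have T2 : Tendsto (fun β => water F β ((water F β)^[n] 0)
        - water F α ((water F β)^[n] 0)) (nhds α) (nhds 0) := by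
      have hbd : Tendsto (fun β : ℝ => |β - α|) (nhds α) (nhds 0) := by
        have : Tendsto (fun β : ℝ => |β - α|) (nhds α) (nhds |α - α|) :=
          (continuous_abs.comp (continuous_id.sub continuous_const)).tendsto α
        simpa using this
      exact squeeze_zero_norm (fun β => water_dist hFc hFd α β _) hbd
    have := T2.add T1
    simp only [zero_add, sub_add_cancel] at this
    exact this

theorem water_rotation_number_onto (F : ℝ → ℝ) (hFc : Continuous F)
    (hFd : ∀ x : ℝ, F (x + 1) = F x + 1) (rot : ℝ → ℝ)
    (hrot : ∀ α ∈ Set.Icc 0 (supDiff F), ∀ x : ℝ,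
      Tendsto (fun n : ℕ => ((water F α)^[n] x - x) / n) atTop (nhds (rot α))) :
    ContinuousOn rot (Set.Icc 0 (supDiff F)) ∧
    MonotoneOn rot (Set.Icc 0 (supDiff F)) ∧
    rot '' Set.Icc 0 (supDiff F) = Set.Icc (rot 0) (rot (supDiff F)) ∧
    ∀ ρ ∈ Set.Icc (rot 0) (rot (supDiff F)),
      ∃ α ∈ Set.Icc 0 (supDiff F), rot α = ρ := by
  have hM0 : (0 : ℝ) ≤ supDiff F :=
    Real.iSup_nonneg fun x => sub_nonneg.2 (lowerLift_le_self hFc hFd x)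
  -- key displacement estimates
  have key : ∀ α ∈ Set.Icc 0 (supDiff F), ∀ n : ℕ, 0 < n →
      ((water F α)^[n] 0 - 1) / n ≤ rot α ∧ rot α ≤ ((water F α)^[n] 0 + 1) / n := by
    intro α hα n hn
    exact displacement (water_mono hFc hFd α) (water_iter_int hFc hFd α) (hrot α hα 0) n hn
  -- monotonicity
  have hmono : MonotoneOn rot (Set.Icc 0 (supDiff F)) := by
    intro a ha b hb hab
    apply le_of_tendsto_of_tendsto' (hrot a ha 0) (hrot b hb 0)
    intro m
    have h1 := water_iter_le hFc hFd hab m 0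
    have h2 : (0 : ℝ) ≤ (m : ℝ) := Nat.cast_nonneg m
    rcases Nat.eq_zero_or_pos m with hm | hm
    · simp [hm]
    · have hm' : (0 : ℝ) < m := by exact_mod_cast hm
      rw [div_le_div_iff₀ hm' hm']
      nlinarith
  -- continuity
  have hcont : ContinuousOn rot (Set.Icc 0 (supDiff F)) := by
    rw [Metric.continuousOn_iff]
    intro α hα ε hε
    obtain ⟨n, hn⟩ := exists_nat_gt (3 / ε)
    have hn0 : 0 < n := by
      by_contra hcon
      push_neg at hcon
      interval_cases n
      simp at hn
      nlinarith [div_pos (by norm_num : (0:ℝ) < 3) hε]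
    have npos : (0 : ℝ) < n := by exact_mod_cast hn0
    have h3 : 3 < (n : ℝ) * ε := by
      rw [div_lt_iff₀ hε] at hn
      linarith
    have hgap : (0 : ℝ) < n * ε - 2 := by linarith
    obtain ⟨δ, hδ0, hδ⟩ := Metric.tendsto_nhds_nhds.1 (iter_param_tendsto hFc hFd α n)
      (n * ε - 2) hgap
    refine ⟨δ, hδ0, ?_⟩
    intro β hβ hdist
    have hd := hδ hdist
    rw [Real.dist_eq] at hd ⊢
    set dα := (water F α)^[n] 0
    set dβ := (water F β)^[n] 0
    have kα := key α hα n hn0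
    have kβ := key β hβ n hn0
    have a1 : dα - 1 ≤ rot α * n := (div_le_iff₀ npos).1 kα.1
    have a2 : rot α * n ≤ dα + 1 := (le_div_iff₀ npos).1 kα.2
    have b1 : dβ - 1 ≤ rot β * n := (div_le_iff₀ npos).1 kβ.1
    have b2 : rot β * n ≤ dβ + 1 := (le_div_iff₀ npos).1 kβ.2
    have habs := abs_lt.1 hd
    rw [abs_lt]
    constructor
    · have h7 : (rot α - rot β) * n < ε * n := by nlinarith [habs.1, habs.2]
      have := lt_of_mul_lt_mul_right h7 npos.le
      linarith
    · have h7 : (rot β - rot α) * n < ε * n := by nlinarith [habs.1, habs.2]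
      have := lt_of_mul_lt_mul_right h7 npos.le
      linarith
  have himage : rot '' Set.Icc 0 (supDiff F) = Set.Icc (rot 0) (rot (supDiff F)) := by
    apply Subset.antisymm
    · rintro _ ⟨x, hx, rfl⟩
      exact ⟨hmono ⟨le_refl 0, hM0⟩ hx hx.1, hmono hx ⟨hM0, le_refl _⟩ hx.2⟩
    · exact intermediate_value_Icc hM0 hcont
  refine ⟨hcont, hmono, himage, ?_⟩
  intro ρ hρ
  rw [← himage] at hρ
  obtain ⟨α, hα, hαρ⟩ := hρ
  exact ⟨α, hα, hαρ⟩
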